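/- Renormalized representation of the Graeffe coefficients: let f be a monic degree-d complex polynomial with nonzero roots ζ₁,...,ζ_d of pairwise distinct moduli, ordered |ζ₁| > ... > |ζ_d|. Let a_i^{(k)} denote the coefficient of x^i in the k-th Graeffe iterate G^k f (whose roots are ζ_j^{2^k}). Then for each 0 ≤ i ≤ d, the renormalized quantity 2^{-k} log|a_i^{(k)}| converges as k → ∞ to h_i := Σ_{j=1}^{d-i} log|ζ_j|; consequently, lim_k 2^{-k} log|a_{i-1}^{(k)}| - lim_k 2^{-k} log|a_i^{(k)}| = log|ζ_{d-i+1}|. -/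

import Mathlib

open Polynomial Filter Finset

set_option maxHeartbeats 1000000

private lemma card_filter_lt_fin (d m : ℕ) (hm : m ≤ d) :
    (Finset.univ.filter (fun j : Fin d => (j : ℕ) < m)).card = m := by
  have : Finset.univ.filter (fun j : Fin d => (j:ℕ) < m)
      = Finset.map (Fin.castLEEmb hm) Finset.univ := by
    ext j
    simp only [mem_filter, mem_univ, true_and, Finset.mem_map, exists_true_left]
    constructor
    · intro hj
      refine ⟨⟨j, hj⟩, ?_⟩
      ext; simp
    · rintro ⟨x, rfl⟩
      simpa using x.2
  simp [this]

private lemma prod_lt_top (d m : ℕ) (g : Fin d → ℝ) (hg : ∀ j, 0 < g j)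
    (hanti : ∀ i j : Fin d, i < j → g j < g i) :
    ∀ n : ℕ, ∀ t : Finset (Fin d), (∑ j ∈ t, (j : ℕ)) = n → t.card = m →
      t ≠ Finset.univ.filter (fun j : Fin d => (j : ℕ) < m) →
      ∏ j ∈ t, g j < ∏ j ∈ Finset.univ.filter (fun j : Fin d => (j : ℕ) < m), g j := by
  intro n
  induction n using Nat.strong_induction_on with
  | _ n ih =>
    intro t hsum hcard hne
    set T₀ := Finset.univ.filter (fun j : Fin d => (j : ℕ) < m) with hT
    have hm : m ≤ d := by
      rw [← hcard]
      simpa using Finset.card_le_univ t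
    have hcardT : T₀.card = m := card_filter_lt_fin d m hm
    -- there is j ∈ t with m ≤ j
    have hex : ∃ j ∈ t, m ≤ (j : ℕ) := by
      by_contra hc
      push_neg at hc
      have hsub : t ⊆ T₀ := by
        intro j hj
        simp only [hT, mem_filter, mem_univ, true_and]
        exact hc j hj
      exact hne (Finset.eq_of_subset_of_card_le hsub (by rw [hcardT, hcard]))
    have hex' : ∃ j' : Fin d, (j' : ℕ) < m ∧ j' ∉ t := by
      by_contra hc
      push_neg at hc
      have hsub : T₀ ⊆ t := by
        intro j hj
        simp only [hT, mem_filter, mem_univ, true_and] at hj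
        exact hc j hj
      exact hne ((Finset.eq_of_subset_of_card_le hsub (by rw [hcardT, hcard])).symm)
    obtain ⟨j, hjt, hjm⟩ := hex
    obtain ⟨j', hj'm, hj't⟩ := hex'
    have hj'j : j' < j := by
      rw [Fin.lt_def]; omega
    have hglt : g j < g j' := hanti j' j hj'j
    have hj'e : j' ∉ t.erase j := fun hmem => hj't (Finset.mem_of_mem_erase hmem)
    set t' := insert j' (t.erase j) with ht'
    have hm1 : 1 ≤ m := hcard ▸ Finset.card_pos.mpr ⟨j, hjt⟩
    have hcard' : t'.card = m := by
      rw [ht', Finset.card_insert_of_notMem hj'e, Finset.card_erase_of_mem hjt, hcard]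
      omega
    have hsum_t : (j : ℕ) + ∑ x ∈ t.erase j, (x : ℕ) = n := by
      rw [← hsum]
      exact Finset.add_sum_erase t _ hjt
    have hsum' : (∑ x ∈ t', (x : ℕ)) = (j' : ℕ) + ∑ x ∈ t.erase j, (x : ℕ) := by
      rw [ht', Finset.sum_insert hj'e]
    have hsumlt : (∑ x ∈ t', (x : ℕ)) < n := by
      rw [hsum']; omega
    have hprod_pos : 0 < ∏ x ∈ t.erase j, g x := Finset.prod_pos fun x _ => hg x
    have hptp : ∏ x ∈ t, g x < ∏ x ∈ t', g x := by
      rw [← Finset.mul_prod_erase t g hjt, ht', Finset.prod_insert hj'e]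
      exact mul_lt_mul_of_pos_right hglt hprod_pos
    rcases eq_or_ne t' T₀ with heq | hne'
    · rw [← heq]; exact hptp
    · exact hptp.trans (ih _ hsumlt t' rfl hcard' hne')

private lemma graeffe_coeff_abs {d : ℕ} (a : Fin d → ℂ) {i : ℕ} (hi : i ≤ d) :
    ‖(∏ j, (X - C (a j))).coeff i‖ =
      ‖∑ t ∈ (Finset.univ : Finset (Fin d)).powersetCard (d - i),
        ∏ j ∈ t, a j‖ := by
  have hcard : (Finset.univ : Finset (Fin d)).card = d := by simp
  have h1 : (∏ j, (X - C (a j))) = ∏ j : Fin d, (X + C (-(a j))) := by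
    simp [sub_eq_add_neg]
  rw [h1, Finset.prod_X_add_C_coeff _ _ (by simp [hi]), hcard]
  have h2 : ∀ t ∈ (Finset.univ : Finset (Fin d)).powersetCard (d - i),
      (∏ j ∈ t, -(a j)) = (-1 : ℂ) ^ (d - i) * ∏ j ∈ t, a j := by
    intro t ht
    have htc : t.card = d - i := (Finset.mem_powersetCard.mp ht).2
    calc (∏ j ∈ t, -(a j)) = ∏ j ∈ t, ((-1 : ℂ) * a j) := by simp
      _ = (∏ _j ∈ t, (-1 : ℂ)) * ∏ j ∈ t, a j := Finset.prod_mul_distrib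
      _ = (-1 : ℂ) ^ (d - i) * ∏ j ∈ t, a j := by rw [Finset.prod_const, htc]
  rw [Finset.sum_congr rfl h2, ← Finset.mul_sum, norm_mul]
  simp

/-- Renormalized convergence of the Graeffe coefficients: if
`f = ∏ (x - ζⱼ)` has roots of pairwise distinct nonzero moduli ordered
decreasingly, and `a_i^{(k)}` is the `i`-th coefficient of the `k`-th
Graeffe iterate (whose roots are `ζⱼ^{2^k}`), then
`2^{-k} log |a_i^{(k)}| → h_i = ∑_{j=1}^{d-i} log |ζⱼ|`, and consequently
`lim 2^{-k} log|a_{i-1}^{(k)}| - lim 2^{-k} log|a_i^{(k)}| = log |ζ_{d-i+1}|`. -/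
theorem renormalized_graeffe_coeff_tendsto (d : ℕ) (ζ : Fin d → ℂ)
    (hpos : ∀ j, 0 < ‖ζ j‖)
    (hanti : ∀ i j : Fin d, i < j → ‖ζ j‖ < ‖ζ i‖)
    (h : ℕ → ℝ)
    (hh : ∀ i, h i = ∑ j ∈ Finset.univ.filter (fun j : Fin d => (j : ℕ) < d - i),
      Real.log (‖ζ j‖)) :
    (∀ i ≤ d,
      Tendsto (fun k : ℕ => (2 : ℝ) ^ (-(k : ℝ)) *
          Real.log ‖
            ((∏ j, (X - C (ζ j ^ (2 ^ k)))).coeff i)‖)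
        atTop (nhds (h i))) ∧
    (∀ (i : ℕ) (h1 : 1 ≤ i) (h2 : i ≤ d),
      h (i - 1) - h i = Real.log (‖ζ ⟨d - i, by omega⟩‖)) := by
  constructor
  · intro i hi
    set m := d - i with hm
    have hmd : m ≤ d := Nat.sub_le d i
    set T₀ := Finset.univ.filter (fun j : Fin d => (j : ℕ) < m) with hT
    set A := ∏ j ∈ T₀, ‖ζ j‖ with hAdef
    have hA : 0 < A := Finset.prod_pos fun j _ => hpos j
    have hlogA : Real.log A = h i := by
      rw [hh i, hAdef, Real.log_prod fun j _ => (hpos j).ne']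
    set P := (Finset.univ : Finset (Fin d)).powersetCard m with hP
    have hT₀P : T₀ ∈ P := by
      rw [hP, Finset.mem_powersetCard]
      exact ⟨Finset.subset_univ _, card_filter_lt_fin d m hmd⟩
    set S : ℕ → ℂ := fun k => ∑ t ∈ P, ∏ j ∈ t, ζ j ^ (2 ^ k) with hS
    have habs : ∀ k : ℕ,
        ‖(∏ j, (X - C (ζ j ^ (2 ^ k)))).coeff i‖ = ‖S k‖ :=
      fun k => graeffe_coeff_abs _ hi
    -- the top product and the remainder
    have hsplit : ∀ k : ℕ, S k = (∏ j ∈ T₀, ζ j ^ (2 ^ k))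
        + ∑ t ∈ P.erase T₀, ∏ j ∈ t, ζ j ^ (2 ^ k) := by
      intro k
      rw [hS]
      exact (Finset.add_sum_erase P _ hT₀P).symm
    have habs_prod : ∀ (t : Finset (Fin d)) (k : ℕ),
        ‖∏ j ∈ t, ζ j ^ (2 ^ k)‖ = (∏ j ∈ t, ‖ζ j‖) ^ (2 ^ k) := by
      intro t k
      rw [norm_prod, ← Finset.prod_pow]
      exact Finset.prod_congr rfl fun j _ => norm_pow _ _
    -- each non-top product of moduli is strictly less than A
    have hclt : ∀ t ∈ P.erase T₀, (∏ j ∈ t, ‖ζ j‖) < A := by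
      intro t ht
      obtain ⟨htne, htP⟩ := Finset.mem_erase.mp ht
      exact prod_lt_top d m (fun j => ‖ζ j‖) hpos hanti
        _ t rfl (Finset.mem_powersetCard.mp htP).2 htne
    set ε : ℕ → ℝ := fun k => ∑ t ∈ P.erase T₀,
      ((∏ j ∈ t, ‖ζ j‖) / A) ^ (2 ^ k) with hε
    have hε_nonneg : ∀ k, 0 ≤ ε k := by
      intro k
      apply Finset.sum_nonneg
      intro t _
      positivity
    have hε_tendsto : Tendsto ε atTop (nhds 0) := by
      have : Tendsto (fun k : ℕ => ∑ t ∈ P.erase T₀,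
          ((∏ j ∈ t, ‖ζ j‖) / A) ^ (2 ^ k)) atTop
          (nhds (∑ _t ∈ P.erase T₀, (0 : ℝ))) := by
        apply tendsto_finset_sum
        intro t ht
        have hq0 : 0 ≤ (∏ j ∈ t, ‖ζ j‖) / A := by positivity
        have hq1 : (∏ j ∈ t, ‖ζ j‖) / A < 1 :=
          (div_lt_one hA).mpr (hclt t ht)
        exact (tendsto_pow_atTop_nhds_zero_of_lt_one hq0 hq1).comp
          (tendsto_pow_atTop_atTop_of_one_lt one_lt_two)
      simpa using this
    -- remainder bound
    have hRbound : ∀ k : ℕ,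
        ‖∑ t ∈ P.erase T₀, ∏ j ∈ t, ζ j ^ (2 ^ k)‖ ≤ A ^ (2 ^ k) * ε k := by
      intro k
      calc ‖∑ t ∈ P.erase T₀, ∏ j ∈ t, ζ j ^ (2 ^ k)‖
          ≤ ∑ t ∈ P.erase T₀, ‖∏ j ∈ t, ζ j ^ (2 ^ k)‖ := by
            exact norm_sum_le _ _
        _ = ∑ t ∈ P.erase T₀, (∏ j ∈ t, ‖ζ j‖) ^ (2 ^ k) := by
            exact Finset.sum_congr rfl fun t _ => habs_prod t k
        _ = A ^ (2 ^ k) * ε k := by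
            rw [hε, Finset.mul_sum]
            refine Finset.sum_congr rfl fun t _ => ?_
            rw [div_pow, mul_div_cancel₀]
            positivity
    have hApow : ∀ k : ℕ, (0 : ℝ) < A ^ (2 ^ k) := fun k => pow_pos hA _
    -- main estimates, eventually
    have hev : ∀ᶠ k : ℕ in atTop,
        ‖(2 : ℝ) ^ (-(k : ℝ)) * Real.log (‖S k‖) - h i‖
          ≤ (2 : ℝ) ^ (-(k : ℝ)) * Real.log 2 := by
      filter_upwards [hε_tendsto.eventually (gt_mem_nhds (by norm_num : (0:ℝ) < 1/2))]
        with k hεk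
      have hεk' : ε k ≤ 1 / 2 := le_of_lt hεk
      have hlow : A ^ (2 ^ k) / 2 ≤ ‖S k‖ := by
        have h1 : ‖∏ j ∈ T₀, ζ j ^ (2 ^ k)‖
            ≤ ‖S k‖
              + ‖∑ t ∈ P.erase T₀, ∏ j ∈ t, ζ j ^ (2 ^ k)‖ := by
          have := norm_add_le (S k) (-(∑ t ∈ P.erase T₀, ∏ j ∈ t, ζ j ^ (2 ^ k)))
          rw [norm_neg] at this
          calc ‖∏ j ∈ T₀, ζ j ^ (2 ^ k)‖
              = ‖S k + -(∑ t ∈ P.erase T₀, ∏ j ∈ t, ζ j ^ (2 ^ k))‖ := by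
                rw [hsplit k]; ring_nf
            _ ≤ _ := this
        rw [habs_prod T₀ k] at h1
        have h2 := hRbound k
        nlinarith [hApow k]
      have hup : ‖S k‖ ≤ (3 / 2) * A ^ (2 ^ k) := by
        calc ‖S k‖
            ≤ ‖∏ j ∈ T₀, ζ j ^ (2 ^ k)‖
              + ‖∑ t ∈ P.erase T₀, ∏ j ∈ t, ζ j ^ (2 ^ k)‖ := by
              rw [hsplit k]; exact norm_add_le _ _
          _ ≤ A ^ (2 ^ k) + A ^ (2 ^ k) * ε k := by
              rw [habs_prod T₀ k]
              exact add_le_add_right (hRbound k) _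
          _ ≤ (3 / 2) * A ^ (2 ^ k) := by nlinarith [hApow k]
      have hSpos : 0 < ‖S k‖ :=
        lt_of_lt_of_le (half_pos (hApow k)) hlow
      set r := ‖S k‖ / A ^ (2 ^ k) with hr
      have hr_lo : (1 : ℝ) / 2 ≤ r := by
        rw [hr, le_div_iff₀ (hApow k)]
        calc 1 / 2 * A ^ (2 ^ k) = A ^ (2 ^ k) / 2 := by ring
          _ ≤ ‖S k‖ := hlow
      have hr_hi : r ≤ 3 / 2 := by
        rw [hr, div_le_iff₀ (hApow k)]
        calc ‖S k‖ ≤ (3 / 2) * A ^ (2 ^ k) := hup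
          _ = 3 / 2 * A ^ (2 ^ k) := by ring
      have hr_pos : 0 < r := lt_of_lt_of_le (by norm_num) hr_lo
      have hlogr : |Real.log r| ≤ Real.log 2 := by
        rw [abs_le]
        constructor
        · rw [← Real.log_inv]
          apply Real.log_le_log (by norm_num)
          rw [(by norm_num : ((2:ℝ))⁻¹ = 1 / 2)]
          exact hr_lo
        · exact Real.log_le_log hr_pos (hr_hi.trans (by norm_num))
      set c : ℝ := (2 : ℝ) ^ (k : ℕ) with hc
      have hcpos : 0 < c := by positivity
      have hlogS : Real.log (‖S k‖) = Real.log r + c * Real.log A := by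
        have h1 : Real.log r
            = Real.log (‖S k‖) - ((2 ^ k : ℕ) : ℝ) * Real.log A := by
          rw [hr, Real.log_div hSpos.ne' (hApow k).ne', Real.log_pow]
        have h2 : ((2 ^ k : ℕ) : ℝ) = c := by push_cast [hc]; ring
        rw [h2] at h1
        linarith
      have hpow : (2 : ℝ) ^ (-(k : ℝ)) = c⁻¹ := by
        rw [hc, ← Real.rpow_natCast (2 : ℝ) k, ← Real.rpow_neg (by norm_num)]
      have key : (2 : ℝ) ^ (-(k : ℝ)) * Real.log (‖S k‖) - h i
          = c⁻¹ * Real.log r := by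
        rw [hpow, hlogS, ← hlogA]
        field_simp
        ring
      rw [key, hpow, Real.norm_eq_abs, abs_mul, abs_inv, abs_of_pos hcpos]
      exact mul_le_mul_of_nonneg_left hlogr (by positivity)
    -- assemble
    have hfun : (fun k : ℕ => (2 : ℝ) ^ (-(k : ℝ)) *
        Real.log (‖(∏ j, (X - C (ζ j ^ (2 ^ k)))).coeff i‖))
        = fun k : ℕ => (2 : ℝ) ^ (-(k : ℝ)) * Real.log (‖S k‖) :=
      funext fun k => by rw [habs k]
    rw [hfun, ← tendsto_sub_nhds_zero_iff]
    have hbt : Tendsto (fun k : ℕ => (2 : ℝ) ^ (-(k : ℝ)) * Real.log 2) atTop (nhds 0) := by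
      have heq : (fun k : ℕ => (2 : ℝ) ^ (-(k : ℝ))) = fun k : ℕ => ((1 : ℝ) / 2) ^ k := by
        funext k
        rw [one_div, inv_pow, ← Real.rpow_natCast (2 : ℝ) k,
          ← Real.rpow_neg (by norm_num : (0:ℝ) ≤ 2)]
      have h0 : Tendsto (fun k : ℕ => (2 : ℝ) ^ (-(k : ℝ))) atTop (nhds 0) := by
        rw [heq]
        exact tendsto_pow_atTop_nhds_zero_of_lt_one (by norm_num) (by norm_num)
      simpa using h0.mul_const (Real.log 2)
    exact squeeze_zero_norm' hev hbt
  · intro i h1 h2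
    rw [hh, hh]
    have hd : d - (i - 1) = (d - i) + 1 := by omega
    rw [hd]
    have hsplit : Finset.univ.filter (fun j : Fin d => (j : ℕ) < (d - i) + 1)
        = insert (⟨d - i, by omega⟩ : Fin d)
          (Finset.univ.filter fun j : Fin d => (j : ℕ) < d - i) := by
      ext j
      simp only [mem_filter, mem_univ, true_and, Finset.mem_insert, Fin.ext_iff]
      omega
    rw [hsplit, Finset.sum_insert (by simp)]
    ring
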